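/- For all θ, φ ∈ ℝ, the set W_{θ,φ} = {x ∈ ℝ³ : x₁ cos θ + x₂ sin θ > x₃ and x₁ cos φ + x₂ sin φ > −x₃} is an open convex cone contained in V, and the union of the sets W_{θ,φ} over all pairs with θ ≠ φ equals V. -/

import Mathlib

/-- For all `θ, φ ∈ ℝ`, the set
`W_{θ,φ} = {x ∈ ℝ³ : x₁ cos θ + x₂ sin θ > x₃ and x₁ cos φ + x₂ sin φ > −x₃}` is an open
convex cone contained in `V = {x : x₁² + x₂² > x₃²}`, and the union of the `W_{θ,φ}` over
all pairs with `θ ≠ φ` equals `V`. -/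
theorem stmt_6
    (V : Set (Fin 3 → ℝ)) (hV : V = {x | x 2 ^ 2 < x 0 ^ 2 + x 1 ^ 2})
    (W : ℝ → ℝ → Set (Fin 3 → ℝ))
    (hW : ∀ θ φ, W θ φ = {x | x 2 < x 0 * Real.cos θ + x 1 * Real.sin θ ∧
        -(x 2) < x 0 * Real.cos φ + x 1 * Real.sin φ}) :
    (∀ θ φ : ℝ, IsOpen (W θ φ) ∧ Convex ℝ (W θ φ) ∧
      (∀ x ∈ W θ φ, ∀ y ∈ W θ φ, x + y ∈ W θ φ) ∧
      (∀ t : ℝ, 0 < t → ∀ x ∈ W θ φ, t • x ∈ W θ φ) ∧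
      W θ φ ⊆ V) ∧
    (⋃ θ : ℝ, ⋃ φ : ℝ, ⋃ _h : θ ≠ φ, W θ φ) = V := by
  have hsub : ∀ θ φ : ℝ, W θ φ ⊆ V := by
    intro θ φ x hx
    rw [hW] at hx
    rw [hV]
    obtain ⟨h1, h2⟩ := hx
    simp only [Set.mem_setOf_eq]
    have hb1 : (x 0 * Real.cos θ + x 1 * Real.sin θ) ^ 2 ≤ x 0 ^ 2 + x 1 ^ 2 := by
      nlinarith [Real.sin_sq_add_cos_sq θ, sq_nonneg (x 0 * Real.sin θ - x 1 * Real.cos θ)]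
    have hb2 : (x 0 * Real.cos φ + x 1 * Real.sin φ) ^ 2 ≤ x 0 ^ 2 + x 1 ^ 2 := by
      nlinarith [Real.sin_sq_add_cos_sq φ, sq_nonneg (x 0 * Real.sin φ - x 1 * Real.cos φ)]
    rcases le_or_gt 0 (x 2) with h | h
    · nlinarith
    · nlinarith
  constructor
  · intro θ φ
    refine ⟨?_, ?_, ?_, ?_, hsub θ φ⟩
    · rw [hW]
      exact (isOpen_lt (continuous_apply 2)
          (((continuous_apply 0).mul continuous_const).add
            ((continuous_apply 1).mul continuous_const))).inter
        (isOpen_lt (continuous_apply 2).neg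
          (((continuous_apply 0).mul continuous_const).add
            ((continuous_apply 1).mul continuous_const)))
    · rw [hW]
      intro x hx y hy a b ha hb hab
      obtain ⟨hx1, hx2⟩ := hx
      obtain ⟨hy1, hy2⟩ := hy
      simp only [Set.mem_setOf_eq, Pi.add_apply, Pi.smul_apply, smul_eq_mul] at *
      rcases ha.eq_or_lt with rfl | ha'
      · simp only [zero_mul, zero_add]
        have hb1 : b = 1 := by linarith
        subst hb1
        simpa using ⟨hy1, hy2⟩
      · have k1 := mul_lt_mul_of_pos_left hx1 ha'
        have k2 := mul_lt_mul_of_pos_left hx2 ha'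
        have k3 := mul_le_mul_of_nonneg_left hy1.le hb
        have k4 := mul_le_mul_of_nonneg_left hy2.le hb
        constructor <;> nlinarith
    · intro x hx y hy
      rw [hW] at hx hy ⊢
      obtain ⟨hx1, hx2⟩ := hx
      obtain ⟨hy1, hy2⟩ := hy
      simp only [Set.mem_setOf_eq, Pi.add_apply] at *
      constructor <;> nlinarith
    · intro t ht x hx
      rw [hW] at hx ⊢
      obtain ⟨hx1, hx2⟩ := hx
      simp only [Set.mem_setOf_eq, Pi.smul_apply, smul_eq_mul] at *
      constructor <;> nlinarith
  · ext x
    simp only [Set.mem_iUnion]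
    constructor
    · rintro ⟨θ, φ, _, hx⟩
      exact hsub θ φ hx
    · intro hx
      rw [hV] at hx
      simp only [Set.mem_setOf_eq] at hx
      have hr : (0:ℝ) ≤ x 2 ^ 2 := sq_nonneg _
      have hz : (⟨x 0, x 1⟩ : ℂ) ≠ 0 := by
        intro h
        rw [Complex.ext_iff] at h
        simp at h
        nlinarith [h.1, h.2]
      set θ := Complex.arg ⟨x 0, x 1⟩ with hθ
      have habs : ‖(⟨x 0, x 1⟩ : ℂ)‖ = Real.sqrt (x 0 ^ 2 + x 1 ^ 2) := by
        rw [Complex.norm_def, Complex.normSq_mk]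
        ring_nf
      have hcos : Real.cos θ = x 0 / Real.sqrt (x 0 ^ 2 + x 1 ^ 2) := by
        rw [hθ, Complex.cos_arg hz, habs]
      have hsin : Real.sin θ = x 1 / Real.sqrt (x 0 ^ 2 + x 1 ^ 2) := by
        rw [hθ, Complex.sin_arg, habs]
      have hrpos : 0 < Real.sqrt (x 0 ^ 2 + x 1 ^ 2) := by
        apply Real.sqrt_pos.2; nlinarith
      have hsq : Real.sqrt (x 0 ^ 2 + x 1 ^ 2) ^ 2 = x 0 ^ 2 + x 1 ^ 2 :=
        Real.sq_sqrt (by nlinarith)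
      have hval : x 0 * Real.cos θ + x 1 * Real.sin θ = Real.sqrt (x 0 ^ 2 + x 1 ^ 2) := by
        rw [hcos, hsin]
        field_simp
        nlinarith
      have habs2 : |x 2| < Real.sqrt (x 0 ^ 2 + x 1 ^ 2) := by
        rw [← Real.sqrt_sq_eq_abs]
        exact Real.sqrt_lt_sqrt (sq_nonneg _) hx
      have h1 : x 2 < x 0 * Real.cos θ + x 1 * Real.sin θ := by
        rw [hval]; exact lt_of_le_of_lt (le_abs_self _) habs2
      have h2 : -(x 2) < x 0 * Real.cos θ + x 1 * Real.sin θ := by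
        rw [hval]; exact lt_of_le_of_lt (neg_le_abs _) habs2
      refine ⟨θ, θ + 2 * Real.pi, ?_, ?_⟩
      · intro h
        have hp := Real.two_pi_pos
        linarith
      · rw [hW]
        refine ⟨h1, ?_⟩
        rw [Real.cos_add_two_pi, Real.sin_add_two_pi]
        exact h2
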